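/- Let S and A be nonempty finite sets and let 𝒫 ⊆ Δ(S)^{S×A} be a compact (not necessarily convex) uncertainty set that is weakly s-tractable. Then for every next-state-independent r ∈ ℝ^{S×A×S}, every γ ∈ [0,1) and every μ ∈ Δ(S): (i) max over stationary policies π ∈ Δ(A)^S of min_{P∈𝒫} ∑_s μ_s v^{π,P}_s equals ∑_s μ_s u*_s; (ii) there exists a stationary policy π* with u^{π*} = u*, and every stationary policy π* satisfying u^{π*} = u* attains the maximum in (i). -/

import Mathlib

open scoped BigOperators

namespace RMDP

variable {S A : Type*} [Fintype S] [Fintype A]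

def IsKernel (P : S → A → S → ℝ) : Prop := ∀ s a, P s a ∈ stdSimplex ℝ S

def IsPolicy (π : S → A → ℝ) : Prop := ∀ s, π s ∈ stdSimplex ℝ A

def NextStateIndep (r : S → A → S → ℝ) : Prop :=
  ∀ (s : S) (a : A) (s' s'' : S), r s a s' = r s a s''

noncomputable def minOver {K : Type*} (K0 : Set K) (f : K → ℝ) : ℝ := sInf (f '' K0)

noncomputable def maxOver {K : Type*} (K0 : Set K) (f : K → ℝ) : ℝ := sSup (f '' K0)

noncomputable def TpiP (π : S → A → ℝ) (r : S → A → S → ℝ) (γ : ℝ)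
    (P : S → A → S → ℝ) (v : S → ℝ) : S → ℝ :=
  fun s => ∑ a, π s a * ∑ s', P s a s' * (r s a s' + γ * v s')

noncomputable def Tpi (US : Set (S → A → S → ℝ)) (π : S → A → ℝ)
    (r : S → A → S → ℝ) (γ : ℝ) (v : S → ℝ) : S → ℝ :=
  fun s => minOver US (fun P => ∑ a, π s a * ∑ s', P s a s' * (r s a s' + γ * v s'))

noncomputable def TpiHat (US : Set (S → A → S → ℝ)) (π : S → A → ℝ)
    (r : S → A → S → ℝ) (γ : ℝ) (v : S → ℝ) : S → ℝ :=
  fun s => ∑ a, π s a * minOver US (fun P => ∑ s', P s a s' * (r s a s' + γ * v s'))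

noncomputable def Topt (US : Set (S → A → S → ℝ)) (r : S → A → S → ℝ) (γ : ℝ)
    (v : S → ℝ) : S → ℝ :=
  fun s => maxOver (stdSimplex ℝ A)
    (fun p => minOver US (fun P => ∑ a, p a * ∑ s', P s a s' * (r s a s' + γ * v s')))

def IsHPolicy (π : List (S × A) → S → A → ℝ) : Prop := ∀ h s, π h s ∈ stdSimplex ℝ A

noncomputable def expRHH (π : List (S × A) → S → A → ℝ)
    (Q : List (S × A) → S → A → S → ℝ) (r : S → A → S → ℝ) :
    ℕ → List (S × A) → S → ℝ
  | 0, h, s => ∑ a, π h s a * ∑ s', Q (h ++ [(s, a)]) s a s' * r s a s'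
  | (t + 1), h, s =>
      ∑ a, π h s a * ∑ s', Q (h ++ [(s, a)]) s a s' * expRHH π Q r t (h ++ [(s, a)]) s'

noncomputable def vHH (π : List (S × A) → S → A → ℝ)
    (Q : List (S × A) → S → A → S → ℝ) (r : S → A → S → ℝ) (γ : ℝ) (s : S) : ℝ :=
  ∑' t : ℕ, γ ^ t * expRHH π Q r t [] s

def STractable (US : Set (S → A → S → ℝ)) : Prop :=
  ∀ π : S → A → ℝ, IsPolicy π →
    ∀ (r : S → A → S → ℝ) (γ : ℝ), 0 ≤ γ → γ < 1 →
      ∀ v : (S → A → S → ℝ) → S → ℝ, (∀ P ∈ US, TpiP π r γ P (v P) = v P) →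
        ∀ u : S → ℝ, Tpi US π r γ u = u →
          ∀ μ ∈ stdSimplex ℝ S,
            minOver US (fun P => ∑ s, μ s * v P s) = ∑ s, μ s * u s

def SATractable (US : Set (S → A → S → ℝ)) : Prop :=
  ∀ π : S → A → ℝ, IsPolicy π →
    ∀ (r : S → A → S → ℝ) (γ : ℝ), 0 ≤ γ → γ < 1 →
      ∀ v : (S → A → S → ℝ) → S → ℝ, (∀ P ∈ US, TpiP π r γ P (v P) = v P) →
        ∀ uhat : S → ℝ, TpiHat US π r γ uhat = uhat →
          ∀ μ ∈ stdSimplex ℝ S,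
            minOver US (fun P => ∑ s, μ s * v P s) = ∑ s, μ s * uhat s

def WeakSTractable (US : Set (S → A → S → ℝ)) : Prop :=
  ∀ π : S → A → ℝ, IsPolicy π →
    ∀ (r : S → A → S → ℝ), NextStateIndep r → ∀ γ : ℝ, 0 ≤ γ → γ < 1 →
      ∀ v : (S → A → S → ℝ) → S → ℝ, (∀ P ∈ US, TpiP π r γ P (v P) = v P) →
        ∀ u : S → ℝ, Tpi US π r γ u = u →
          ∀ μ ∈ stdSimplex ℝ S,
            minOver US (fun P => ∑ s, μ s * v P s) = ∑ s, μ s * u s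

def WeakSATractable (US : Set (S → A → S → ℝ)) : Prop :=
  ∀ π : S → A → ℝ, IsPolicy π →
    ∀ (r : S → A → S → ℝ), NextStateIndep r → ∀ γ : ℝ, 0 ≤ γ → γ < 1 →
      ∀ v : (S → A → S → ℝ) → S → ℝ, (∀ P ∈ US, TpiP π r γ P (v P) = v P) →
        ∀ uhat : S → ℝ, TpiHat US π r γ uhat = uhat →
          ∀ μ ∈ stdSimplex ℝ S,
            minOver US (fun P => ∑ s, μ s * v P s) = ∑ s, μ s * uhat s

def SSPs (US : Set (S → A → S → ℝ)) : Prop :=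
  ∀ V : S → A → S → ℝ, ∃ Pstar ∈ US, ∀ s : S, ∀ P ∈ US,
    (∑ a, ∑ s', Pstar s a s' * V s a s') ≤ ∑ a, ∑ s', P s a s' * V s a s'

def SSPsa (US : Set (S → A → S → ℝ)) : Prop :=
  ∀ V : S → A → S → ℝ, ∃ Pstar ∈ US, ∀ (s : S) (a : A), ∀ P ∈ US,
    (∑ s', Pstar s a s' * V s a s') ≤ ∑ s', P s a s' * V s a s'

def WeakSSPs (US : Set (S → A → S → ℝ)) : Prop :=
  ∀ π : S → A → ℝ, IsPolicy π → ∀ V : S → ℝ, ∃ Pstar ∈ US, ∀ s : S, ∀ P ∈ US,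
    (∑ a, π s a * ∑ s', Pstar s a s' * V s') ≤ ∑ a, π s a * ∑ s', P s a s' * V s'

def WeakSSPsa (US : Set (S → A → S → ℝ)) : Prop :=
  ∀ V : S → ℝ, ∃ Pstar ∈ US, ∀ (s : S) (a : A), ∀ P ∈ US,
    (∑ s', Pstar s a s' * V s') ≤ ∑ s', P s a s' * V s'


section Aux7

lemma abs_weightSum_le7 {ι : Type*} [Fintype ι] {w x : ι → ℝ} {M : ℝ}
    (hw : ∀ i, 0 ≤ w i) (hsum : ∑ i, w i = 1) (hx : ∀ i, |x i| ≤ M) :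
    |∑ i, w i * x i| ≤ M := by
  calc |∑ i, w i * x i| ≤ ∑ i, |w i * x i| := Finset.abs_sum_le_sum_abs _ _
    _ ≤ ∑ i, w i * M := by
        apply Finset.sum_le_sum; intro i _
        rw [abs_mul, abs_of_nonneg (hw i)]
        exact mul_le_mul_of_nonneg_left (hx i) (hw i)
    _ = M := by rw [← Finset.sum_mul, hsum, one_mul]

lemma minOver_le7 {K : Type*} {K0 : Set K} {f : K → ℝ} (hb : BddBelow (f '' K0))
    {P : K} (hP : P ∈ K0) : minOver K0 f ≤ f P := csInf_le hb ⟨P, hP, rfl⟩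

lemma le_minOver7 {K : Type*} {K0 : Set K} (hne : K0.Nonempty) {f : K → ℝ} {c : ℝ}
    (h : ∀ P ∈ K0, c ≤ f P) : c ≤ minOver K0 f :=
  le_csInf (hne.image f) (by rintro _ ⟨P, hP, rfl⟩; exact h P hP)

lemma bddBelow_of_le7 {K : Type*} {K0 : Set K} {f : K → ℝ} {c : ℝ}
    (h : ∀ P ∈ K0, c ≤ f P) : BddBelow (f '' K0) :=
  ⟨c, by rintro _ ⟨P, hP, rfl⟩; exact h P hP⟩

lemma minOver_le_add7 {K : Type*} {K0 : Set K} (hne : K0.Nonempty) {f g : K → ℝ} {ε : ℝ}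
    (hbf : BddBelow (f '' K0)) (h : ∀ P ∈ K0, f P ≤ g P + ε) :
    minOver K0 f ≤ minOver K0 g + ε := by
  have h2 : minOver K0 f - ε ≤ minOver K0 g :=
    le_minOver7 hne fun P hP => by
      have := (minOver_le7 hbf hP).trans (h P hP); linarith
  linarith

lemma abs_minOver_sub_le7 {K : Type*} {K0 : Set K} (hne : K0.Nonempty) {f g : K → ℝ} {ε : ℝ}
    (hbf : BddBelow (f '' K0)) (hbg : BddBelow (g '' K0))
    (h : ∀ P ∈ K0, |f P - g P| ≤ ε) : |minOver K0 f - minOver K0 g| ≤ ε := by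
  have h1 := minOver_le_add7 hne hbf (g := g) (ε := ε)
    (fun P hP => by have := abs_le.1 (h P hP); linarith)
  have h2 := minOver_le_add7 hne hbg (g := f) (ε := ε)
    (fun P hP => by have := abs_le.1 (h P hP); linarith)
  rw [abs_le]; constructor <;> linarith

lemma minOver_mono7 {K : Type*} {K0 : Set K} (hne : K0.Nonempty) {f g : K → ℝ}
    (hbf : BddBelow (f '' K0)) (h : ∀ P ∈ K0, f P ≤ g P) :
    minOver K0 f ≤ minOver K0 g := by
  have := minOver_le_add7 hne hbf (g := g) (ε := 0)
    (fun P hP => by simpa using h P hP)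
  linarith

lemma le_triple_sum7 {S A : Type*} [Fintype S] [Fintype A] {f : S → A → S → ℝ}
    (hf : ∀ s a s', 0 ≤ f s a s') (s : S) (a : A) (s' : S) :
    f s a s' ≤ ∑ t, ∑ b, ∑ t', f t b t' := by
  have h1 : f s a s' ≤ ∑ t', f s a t' :=
    Finset.single_le_sum (fun i _ => hf s a i) (Finset.mem_univ s')
  have h2 : ∑ t', f s a t' ≤ ∑ b, ∑ t', f s b t' :=
    Finset.single_le_sum (fun i _ => Finset.sum_nonneg fun j _ => hf s i j)
      (Finset.mem_univ a)
  have h3 : ∑ b, ∑ t', f s b t' ≤ ∑ t, ∑ b, ∑ t', f t b t' :=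
    Finset.single_le_sum
      (fun i _ => Finset.sum_nonneg fun j _ => Finset.sum_nonneg fun k _ => hf i j k)
      (Finset.mem_univ s)
  linarith

variable {S A : Type*} [Fintype S] [Fintype A]

/-- A uniform bound on `|r s a s' + γ * v s'|`. -/
noncomputable def Mb7 (r : S → A → S → ℝ) (γ : ℝ) (v : S → ℝ) : ℝ :=
  ∑ t, ∑ b, ∑ t', |r t b t' + γ * v t'|

lemma Mb7_bound (r : S → A → S → ℝ) (γ : ℝ) (v : S → ℝ) (s : S) (a : A) (s' : S) :
    |r s a s' + γ * v s'| ≤ Mb7 r γ v :=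
  le_triple_sum7 (f := fun t b t' => |r t b t' + γ * v t'|) (fun _ _ _ => abs_nonneg _) s a s'

lemma inner_abs_le7 {US : Set (S → A → S → ℝ)} (hker : ∀ P ∈ US, IsKernel P)
    {P : S → A → S → ℝ} (hP : P ∈ US) (r : S → A → S → ℝ) (γ : ℝ) (v : S → ℝ)
    (s : S) (a : A) :
    |∑ s', P s a s' * (r s a s' + γ * v s')| ≤ Mb7 r γ v :=
  abs_weightSum_le7 (hker P hP s a).1 (hker P hP s a).2 (fun s' => Mb7_bound r γ v s a s')

lemma outer_abs_le7 {US : Set (S → A → S → ℝ)} (hker : ∀ P ∈ US, IsKernel P)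
    {P : S → A → S → ℝ} (hP : P ∈ US) (r : S → A → S → ℝ) (γ : ℝ) (v : S → ℝ)
    (s : S) {p : A → ℝ} (hp : p ∈ stdSimplex ℝ A) :
    |∑ a, p a * ∑ s', P s a s' * (r s a s' + γ * v s')| ≤ Mb7 r γ v :=
  abs_weightSum_le7 hp.1 hp.2 (fun a => inner_abs_le7 hker hP r γ v s a)

lemma bddBelow_tpi7 {US : Set (S → A → S → ℝ)} (hker : ∀ P ∈ US, IsKernel P)
    (r : S → A → S → ℝ) (γ : ℝ) (v : S → ℝ) (s : S) {p : A → ℝ}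
    (hp : p ∈ stdSimplex ℝ A) :
    BddBelow ((fun P => ∑ a, p a * ∑ s', P s a s' * (r s a s' + γ * v s')) '' US) :=
  bddBelow_of_le7 (c := -(Mb7 r γ v)) fun P hP =>
    neg_le_of_abs_le (outer_abs_le7 hker hP r γ v s hp)

lemma tpi_contracting7 [Nonempty S] [Nonempty A] {US : Set (S → A → S → ℝ)}
    (hne : US.Nonempty) (hker : ∀ P ∈ US, IsKernel P)
    {π : S → A → ℝ} (hπ : IsPolicy π) (r : S → A → S → ℝ)
    {γ : ℝ} (hγ0 : 0 ≤ γ) (hγ1 : γ < 1) :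
    ContractingWith ⟨γ, hγ0⟩ (Tpi US π r γ) := by
  constructor
  · exact_mod_cast hγ1
  · apply LipschitzWith.of_dist_le_mul
    intro v w
    show dist _ _ ≤ γ * dist v w
    rw [dist_pi_le_iff (mul_nonneg hγ0 dist_nonneg)]
    intro s
    rw [Real.dist_eq]
    apply abs_minOver_sub_le7 hne (bddBelow_tpi7 hker r γ v s (hπ s))
      (bddBelow_tpi7 hker r γ w s (hπ s))
    intro P hP
    have hrw : (∑ a, π s a * ∑ s', P s a s' * (r s a s' + γ * v s'))
        - (∑ a, π s a * ∑ s', P s a s' * (r s a s' + γ * w s'))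
        = ∑ a, π s a * ∑ s', P s a s' * (γ * (v s' - w s')) := by
      rw [← Finset.sum_sub_distrib]
      apply Finset.sum_congr rfl; intro a _
      rw [← mul_sub, ← Finset.sum_sub_distrib]
      congr 1
      apply Finset.sum_congr rfl; intro s' _; ring
    rw [hrw]
    apply abs_weightSum_le7 (hπ s).1 (hπ s).2
    intro a
    apply abs_weightSum_le7 (hker P hP s a).1 (hker P hP s a).2
    intro s'
    rw [abs_mul, abs_of_nonneg hγ0]
    exact mul_le_mul_of_nonneg_left
      (by rw [← Real.dist_eq]; exact dist_le_pi_dist v w s') hγ0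

lemma tpi_mono7 {US : Set (S → A → S → ℝ)}
    (hne : US.Nonempty) (hker : ∀ P ∈ US, IsKernel P)
    {π : S → A → ℝ} (hπ : IsPolicy π) (r : S → A → S → ℝ)
    {γ : ℝ} (hγ0 : 0 ≤ γ) {v w : S → ℝ} (h : ∀ s', v s' ≤ w s') (s : S) :
    Tpi US π r γ v s ≤ Tpi US π r γ w s := by
  apply minOver_mono7 hne (bddBelow_tpi7 hker r γ v s (hπ s))
  intro P hP
  apply Finset.sum_le_sum; intro a _
  apply mul_le_mul_of_nonneg_left _ ((hπ s).1 a)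
  apply Finset.sum_le_sum; intro s' _
  apply mul_le_mul_of_nonneg_left _ ((hker P hP s a).1 s')
  have := h s'; nlinarith

lemma abs_sum_mul_le7 {ι : Type*} [Fintype ι] {p c : ι → ℝ} {M : ℝ}
    (hc : ∀ i, |c i| ≤ M) : |∑ i, p i * c i| ≤ ∑ i, |p i| * M := by
  calc |∑ i, p i * c i| ≤ ∑ i, |p i * c i| := Finset.abs_sum_le_sum_abs _ _
    _ ≤ ∑ i, |p i| * M := by
        apply Finset.sum_le_sum; intro i _
        rw [abs_mul]
        exact mul_le_mul_of_nonneg_left (hc i) (abs_nonneg _)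

lemma tpi_mono7' {US : Set (S → A → S → ℝ)}
    (hne : US.Nonempty) (hker : ∀ P ∈ US, IsKernel P)
    {π : S → A → ℝ} (hπ : IsPolicy π) (r : S → A → S → ℝ)
    {γ : ℝ} (hγ0 : 0 ≤ γ) {v w : S → ℝ} (h : ∀ s', v s' ≤ w s') (s : S) :
    Tpi US π r γ v s ≤ Tpi US π r γ w s := by
  apply minOver_mono7 hne (bddBelow_tpi7 hker r γ v s (hπ s))
  intro P hP
  apply Finset.sum_le_sum; intro a _
  apply mul_le_mul_of_nonneg_left _ ((hπ s).1 a)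
  apply Finset.sum_le_sum; intro s' _
  apply mul_le_mul_of_nonneg_left _ ((hker P hP s a).1 s')
  have := h s'; nlinarith

end Aux7

theorem stmt7 {S A : Type*} [Fintype S] [Fintype A] [Nonempty S] [Nonempty A]
    (US : Set (S → A → S → ℝ)) (hne : US.Nonempty) (hker : ∀ P ∈ US, IsKernel P)
    (hcpt : IsCompact US) (hws : WeakSTractable US)
    (r : S → A → S → ℝ) (hr : NextStateIndep r) (γ : ℝ) (hγ0 : 0 ≤ γ) (hγ1 : γ < 1)
    (v : (S → A → ℝ) → (S → A → S → ℝ) → S → ℝ)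
    (hv : ∀ π : S → A → ℝ, IsPolicy π → ∀ P ∈ US, TpiP π r γ P (v π P) = v π P)
    (ustar : S → ℝ) (hustar : Topt US r γ ustar = ustar) :
    ∀ μ ∈ stdSimplex ℝ S,
      (maxOver {π : S → A → ℝ | IsPolicy π}
          (fun π => minOver US (fun P => ∑ s, μ s * v π P s)) = ∑ s, μ s * ustar s) ∧
      (∃ πstar : S → A → ℝ, IsPolicy πstar ∧ Tpi US πstar r γ ustar = ustar) ∧
      ∀ πstar : S → A → ℝ, IsPolicy πstar → Tpi US πstar r γ ustar = ustar →
        minOver US (fun P => ∑ s, μ s * v πstar P s) =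
          maxOver {π : S → A → ℝ | IsPolicy π}
            (fun π => minOver US (fun P => ∑ s, μ s * v π P s)) := by
  intro μ hμ
  -- the simplex over A is nonempty
  have hsimplexA : (stdSimplex ℝ A).Nonempty := by
    classical
    obtain ⟨a0⟩ := ‹Nonempty A›
    refine ⟨fun a => if a = a0 then 1 else 0, fun a => ?_, ?_⟩
    · by_cases h : a = a0 <;> simp [h]
    · simp [Finset.sum_ite_eq']
  have hM0 : 0 ≤ Mb7 r γ ustar :=
    (abs_nonneg _).trans (Mb7_bound r γ ustar (Classical.arbitrary S)
      (Classical.arbitrary A) (Classical.arbitrary S))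
  -- Step 1 : Tpi π ustar ≤ ustar for any policy π
  have hTle : ∀ (π : S → A → ℝ), IsPolicy π → ∀ s, Tpi US π r γ ustar s ≤ ustar s := by
    intro π hπ s
    have h1 : Tpi US π r γ ustar s ≤ Topt US r γ ustar s := by
      apply le_csSup
      · refine ⟨Mb7 r γ ustar, ?_⟩
        rintro _ ⟨p, hp, rfl⟩
        obtain ⟨P0, hP0⟩ := hne
        exact (minOver_le7 (bddBelow_tpi7 hker r γ ustar s hp) hP0).trans
          (le_of_abs_le (outer_abs_le7 hker hP0 r γ ustar s hp))
      · exact ⟨π s, hπ s, rfl⟩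
    have h2 := congrFun hustar s
    linarith
  -- Step 2 : every policy has a robust value function below ustar
  have hfix : ∀ (π : S → A → ℝ), IsPolicy π →
      ∃ u : S → ℝ, Tpi US π r γ u = u ∧ ∀ s, u s ≤ ustar s := by
    intro π hπ
    have hc := tpi_contracting7 hne hker hπ r hγ0 hγ1
    refine ⟨ContractingWith.fixedPoint (Tpi US π r γ) hc, hc.fixedPoint_isFixedPt, ?_⟩
    have hiter : ∀ n, ∀ s, (Tpi US π r γ)^[n] ustar s ≤ ustar s := by
      intro n
      induction n with
      | zero => intro s; simp
      | succ n ih =>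
          intro s
          rw [Function.iterate_succ_apply']
          exact (tpi_mono7 hne hker hπ r hγ0 ih s).trans (hTle π hπ s)
    intro s
    have ht := hc.tendsto_iterate_fixedPoint ustar
    have hts : Filter.Tendsto (fun n => (Tpi US π r γ)^[n] ustar s) Filter.atTop
        (nhds (ContractingWith.fixedPoint (Tpi US π r γ) hc s)) :=
      ((continuous_apply s).tendsto _).comp ht
    exact le_of_tendsto' hts (fun n => hiter n s)
  -- Step 3 : existence of an optimal policy
  have hexist : ∃ πstar : S → A → ℝ, IsPolicy πstar ∧ Tpi US πstar r γ ustar = ustar := by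
    have hex : ∀ s : S, ∃ p ∈ stdSimplex ℝ A,
        minOver US (fun P => ∑ a, p a * ∑ s', P s a s' * (r s a s' + γ * ustar s'))
          = ustar s := by
      intro s
      set F : (A → ℝ) → ℝ := fun p =>
        minOver US (fun P => ∑ a, p a * ∑ s', P s a s' * (r s a s' + γ * ustar s'))
        with hF
      have hbdd : ∀ p : A → ℝ, BddBelow
          ((fun P => ∑ a, p a * ∑ s', P s a s' * (r s a s' + γ * ustar s')) '' US) := by
        intro p
        refine bddBelow_of_le7 (c := -(∑ a, |p a| * Mb7 r γ ustar)) fun P hP => ?_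
        exact neg_le_of_abs_le (abs_sum_mul_le7 fun a => inner_abs_le7 hker hP r γ ustar s a)
      have hlip : LipschitzWith (Real.toNNReal ((Fintype.card A) * Mb7 r γ ustar)) F := by
        apply LipschitzWith.of_dist_le_mul
        intro p q
        have hcoe : (Real.toNNReal ((Fintype.card A) * Mb7 r γ ustar) : ℝ)
            = (Fintype.card A) * Mb7 r γ ustar := Real.coe_toNNReal _ (by positivity)
        rw [Real.dist_eq, hcoe]
        apply abs_minOver_sub_le7 hne (hbdd p) (hbdd q)
        intro P hP
        have hrw : (∑ a, p a * ∑ s', P s a s' * (r s a s' + γ * ustar s'))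
            - (∑ a, q a * ∑ s', P s a s' * (r s a s' + γ * ustar s'))
            = ∑ a, (p a - q a) * ∑ s', P s a s' * (r s a s' + γ * ustar s') := by
          rw [← Finset.sum_sub_distrib]
          apply Finset.sum_congr rfl; intro a _; ring
        rw [hrw]
        calc |∑ a, (p a - q a) * ∑ s', P s a s' * (r s a s' + γ * ustar s')|
            ≤ ∑ a, |p a - q a| * Mb7 r γ ustar :=
              abs_sum_mul_le7 fun a => inner_abs_le7 hker hP r γ ustar s a
          _ ≤ ∑ _a : A, dist p q * Mb7 r γ ustar := by
              apply Finset.sum_le_sum; intro a _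
              exact mul_le_mul_of_nonneg_right
                (by rw [← Real.dist_eq]; exact dist_le_pi_dist p q a) hM0
          _ = (Fintype.card A) * Mb7 r γ ustar * dist p q := by
              rw [Finset.sum_const, Finset.card_univ, nsmul_eq_mul]; ring
      obtain ⟨p, hp, hmax⟩ := (isCompact_stdSimplex ℝ A).exists_isMaxOn hsimplexA
        hlip.continuous.continuousOn
      refine ⟨p, hp, ?_⟩
      have hgr : IsGreatest (F '' stdSimplex ℝ A) (F p) :=
        ⟨⟨p, hp, rfl⟩, by rintro _ ⟨q, hq, rfl⟩; exact hmax hq⟩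
      have h1 : Topt US r γ ustar s = F p := hgr.csSup_eq
      have h2 := congrFun hustar s
      calc minOver US (fun P => ∑ a, p a * ∑ s', P s a s' * (r s a s' + γ * ustar s'))
          = F p := rfl
        _ = Topt US r γ ustar s := h1.symm
        _ = ustar s := h2
    choose πstar hpol hval using hex
    exact ⟨πstar, hpol, funext hval⟩
  -- Step 4 : part (i)
  have ha : maxOver {π : S → A → ℝ | IsPolicy π}
      (fun π => minOver US (fun P => ∑ s, μ s * v π P s)) = ∑ s, μ s * ustar s := by
    apply IsGreatest.csSup_eq
    constructor
    · obtain ⟨πs, hp, hfx⟩ := hexist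
      exact ⟨πs, hp, hws πs hp r hr γ hγ0 hγ1 (v πs) (hv πs hp) ustar hfx μ hμ⟩
    · rintro _ ⟨π, hπ, rfl⟩
      obtain ⟨u, hu, hub⟩ := hfix π hπ
      calc (fun π => minOver US (fun P => ∑ s, μ s * v π P s)) π
          = ∑ s, μ s * u s := hws π hπ r hr γ hγ0 hγ1 (v π) (hv π hπ) u hu μ hμ
        _ ≤ ∑ s, μ s * ustar s :=
            Finset.sum_le_sum fun s _ => mul_le_mul_of_nonneg_left (hub s) (hμ.1 s)
  refine ⟨ha, hexist, ?_⟩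
  intro πs hp hfx
  rw [hws πs hp r hr γ hγ0 hγ1 (v πs) (hv πs hp) ustar hfx μ hμ, ha]

end RMDP
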